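/- For the cycle C_n on n ≥ 3 vertices, the 2-fair coalition number is C_{2f}(C_n) = 4 if n is even, and C_{2f}(C_n) = 3 if n is odd. -/

import Mathlib

/-- `S` is a `k`-fair dominating set of `G`: every vertex outside `S` has exactly `k`
neighbors in `S`. -/
def SimpleGraph.KFairDom {V : Type*} (G : SimpleGraph V) (k : ℕ) (S : Set V) : Prop :=
  ∀ v ∉ S, (G.neighborSet v ∩ S).ncard = k

/-- Disjoint sets `A`, `B` form a `k`-fair coalition: neither is a `k`-fair dominating
set, but their union is. -/
def SimpleGraph.KFairCoalition {V : Type*} (G : SimpleGraph V) (k : ℕ) (A B : Set V) : Prop :=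
  Disjoint A B ∧ ¬ G.KFairDom k A ∧ ¬ G.KFairDom k B ∧ G.KFairDom k (A ∪ B)

/-- `P` is a `k`-fair coalition partition of `G`: a partition of the vertex set into
nonempty blocks, each of which is either a `k`-fair dominating set with exactly `k`
vertices or forms a `k`-fair coalition with another block. -/
def SimpleGraph.IsKFairCoalPartition {V : Type*} (G : SimpleGraph V) (k : ℕ)
    (P : Set (Set V)) : Prop :=
  (∀ A ∈ P, A.Nonempty) ∧ ⋃₀ P = Set.univ ∧ P.PairwiseDisjoint id ∧
  ∀ A ∈ P, (G.KFairDom k A ∧ A.ncard = k) ∨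
    (¬ G.KFairDom k A ∧ ∃ B ∈ P, B ≠ A ∧ G.KFairCoalition k A B)

/-- The `k`-fair coalition number `C_{kf}(G)`: the maximum size of a `k`-fair coalition
partition of `G`. -/
noncomputable def SimpleGraph.kFairCoalNum {V : Type*} (G : SimpleGraph V) (k : ℕ) : ℕ :=
  sSup {n | ∃ P : Set (Set V), G.IsKFairCoalPartition k P ∧ P.ncard = n}

/-- The `k`-fair domatic number `d_{kf}(G)`: the maximum size of a partition of the
vertex set into `k`-fair dominating sets. -/
noncomputable def SimpleGraph.kFairDomaticNum {V : Type*} (G : SimpleGraph V) (k : ℕ) : ℕ :=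
  sSup {n | ∃ P : Set (Set V), (∀ A ∈ P, A.Nonempty) ∧ ⋃₀ P = Set.univ ∧
    P.PairwiseDisjoint id ∧ (∀ A ∈ P, G.KFairDom k A) ∧ P.ncard = n}

namespace TwoFairAux

open SimpleGraph Set

/-- complement-independence characterization predicate -/
def DS (m : ℕ) (S : Set (Fin (m+3))) : Prop := ∀ v : Fin (m+3), v ∉ S → v + 1 ∈ S

open Fin.CommRing in
lemma sub_ne_add (m : ℕ) (v : Fin (m+3)) : v - 1 ≠ v + 1 := by
  intro h
  have h2 : (v+1) - (v-1) = 0 := by rw [← h]; simp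
  have h3 : (2 : Fin (m+3)) = 0 := by rw [← h2]; ring
  simp [Fin.ext_iff, Nat.mod_eq_of_lt (show 2 < m + 3 by omega)] at h3

theorem kfd_iff (m : ℕ) (S : Set (Fin (m+3))) :
    (cycleGraph (m+3)).KFairDom 2 S ↔ DS m S := by
  constructor
  · intro h v hv
    have h1 := h v hv
    rw [cycleGraph_neighborSet] at h1
    by_contra h2
    have hsub : ({v - 1, v + 1} : Set (Fin (m+3))) ∩ S ⊆ {v - 1} := by
      intro x ⟨hx1, hx2⟩
      rcases hx1 with h3 | h3
      · exact h3
      · exact absurd (h3 ▸ hx2) h2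
    have := Set.ncard_le_ncard hsub (Set.finite_singleton _)
    simp only [Set.ncard_singleton] at this
    omega
  · intro h v hv
    have h1 : v + 1 ∈ S := h v hv
    have h2 : v - 1 ∈ S := by
      by_contra h2
      have := h _ h2
      simp at this
      exact hv this
    rw [cycleGraph_neighborSet]
    have : ({v - 1, v + 1} : Set (Fin (m+3))) ∩ S = {v - 1, v + 1} := by
      rw [Set.inter_eq_left]
      intro x hx
      rcases hx with h3 | h3 <;> subst h3 <;> assumption
    rw [this, Set.ncard_pair (sub_ne_add m v)]

open Fin.CommRing in
lemma alt_even (m : ℕ) (S1 S2 : Set (Fin (m+3))) (h1 : DS m S1) (h2 : DS m S2)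
    (hd : Disjoint S1 S2) : Even (m+3) := by
  have key : ∀ v : Fin (m+3), (v + 1 ∈ S1 ↔ v ∉ S1) := by
    intro v
    constructor
    · intro hv1 hv
      have hv2 : v ∉ S2 := fun h => (Set.disjoint_left.mp hd hv) h
      have := h2 v hv2
      exact (Set.disjoint_left.mp hd hv1) this
    · exact h1 v
  have step : ∀ (k : ℕ) (v : Fin (m+3)), (v + (k : Fin (m+3)) ∈ S1 ↔ (v ∈ S1 ↔ Even k)) := by
    intro k
    induction k with
    | zero => intro v; simp
    | succ k ih =>
      intro v
      have : v + ((k+1 : ℕ) : Fin (m+3)) = (v + (k : Fin (m+3))) + 1 := by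
        push_cast; ring
      rw [this, key, ih v, Nat.even_add_one]
      tauto
  have := step (m+3) 0
  rw [Fin.natCast_self] at this
  simp at this
  tauto

lemma ds_compl_ncard (m : ℕ) (S : Set (Fin (m+3))) (h : DS m S) : Sᶜ.ncard ≤ S.ncard := by
  apply Set.ncard_le_ncard_of_injOn (fun v => v + 1)
  · intro v hv; exact h v hv
  · intro a _ b _ hab; simpa using hab

lemma small_block (m : ℕ) (hm : 2 ≤ m) (S : Set (Fin (m+3))) (h : DS m S)
    (h2 : S.ncard = 2) : False := by
  have hc := ds_compl_ncard m S h
  have : S.ncard + Sᶜ.ncard = m + 3 := by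
    rw [Set.ncard_add_ncard_compl]; simp
  omega

lemma block_disj {m : ℕ} {P : Set (Set (Fin (m+3)))} (hpd : P.PairwiseDisjoint id)
    {X Y : Set (Fin (m+3))} (hX : X ∈ P) (hY : Y ∈ P) (hne : X ≠ Y)
    {x : Fin (m+3)} (hx : x ∈ X) (hy : x ∈ Y) : False := by
  exact Set.disjoint_left.mp (hpd hX hY hne) hx hy

lemma key_lemma {m : ℕ} {P : Set (Set (Fin (m+3)))} (hU : ⋃₀ P = Set.univ)
    (hpd : P.PairwiseDisjoint id)
    {A B C D : Set (Fin (m+3))} (hB : B ∈ P) (hC : C ∈ P) (hD : D ∈ P)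
    (hAB : A ≠ B) (hAC : A ≠ C) (hAD : A ≠ D) (hBC : B ≠ C) (hBD : B ≠ D) (hCD : C ≠ D)
    (d1 : DS m (A ∪ B)) (d2 : DS m (A ∪ C)) (d3 : DS m (A ∪ D)) : DS m A := by
  intro v hv
  by_contra hv1
  obtain ⟨X1, hX1, hvX1⟩ : ∃ X ∈ P, v ∈ X := by
    have : v ∈ ⋃₀ P := by rw [hU]; trivial
    simpa using this
  obtain ⟨X2, hX2, hvX2⟩ : ∃ X ∈ P, v + 1 ∈ X := by
    have : v + 1 ∈ ⋃₀ P := by rw [hU]; trivial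
    simpa using this
  have hchoice : (B ≠ X1 ∧ B ≠ X2) ∨ (C ≠ X1 ∧ C ≠ X2) ∨ (D ≠ X1 ∧ D ≠ X2) := by
    by_contra hcon
    push_neg at hcon
    obtain ⟨h1, h2, h3⟩ := hcon
    have hB' : B = X1 ∨ B = X2 := by tauto
    have hC' : C = X1 ∨ C = X2 := by tauto
    have hD' : D = X1 ∨ D = X2 := by tauto
    rcases hB' with hB'|hB' <;> rcases hC' with hC'|hC' <;> rcases hD' with hD'|hD' <;>
      first
        | exact hBC (hB'.trans hC'.symm)
        | exact hBD (hB'.trans hD'.symm)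
        | exact hCD (hC'.trans hD'.symm)
  obtain ⟨X, hXP, hXn1, hXn2, hdX⟩ :
      ∃ X, X ∈ P ∧ X ≠ X1 ∧ X ≠ X2 ∧ DS m (A ∪ X) := by
    rcases hchoice with ⟨e1, e2⟩ | ⟨e1, e2⟩ | ⟨e1, e2⟩
    · exact ⟨B, hB, e1, e2, d1⟩
    · exact ⟨C, hC, e1, e2, d2⟩
    · exact ⟨D, hD, e1, e2, d3⟩
  have hvnAX : v ∉ A ∪ X := by
    intro hmem
    rcases hmem with h | h
    · exact hv h
    · exact block_disj hpd hXP hX1 hXn1 h hvX1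
  have := hdX v hvnAX
  rcases this with h | h
  · exact hv1 h
  · exact block_disj hpd hXP hX2 hXn2 h hvX2

lemma card_le_blocks {m : ℕ} {P : Set (Set (Fin (m+3)))} (hne : ∀ A ∈ P, A.Nonempty)
    (hpd : P.PairwiseDisjoint id) : P.ncard ≤ m + 3 := by
  classical
  have : P.ncard ≤ (Set.univ : Set (Fin (m+3))).ncard := by
    apply Set.ncard_le_ncard_of_injOn
      (fun A => if h : A.Nonempty then h.choose else 0)
    · intro A _; trivial
    · intro A hA B hB hab
      simp only [dif_pos (hne A hA), dif_pos (hne B hB)] at hab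
      by_contra hne'
      have h1 : (hne B hB).choose ∈ A := hab ▸ (hne A hA).choose_spec
      exact Set.disjoint_left.mp (hpd hA hB hne') h1 (hne B hB).choose_spec
  simpa [Set.ncard_univ] using this

lemma pick_avoid {X : Type*} {P : Set X} {k : ℕ} {s : Set X} (hfin : s.Finite)
    (hs : s.ncard ≤ k) (h : k < P.ncard) : ∃ x ∈ P, x ∉ s := by
  by_contra hc
  push_neg at hc
  have hsub : P ⊆ s := fun x hx => hc x hx
  have := Set.ncard_le_ncard hsub hfin
  omega

lemma pick_avoid2 {X : Type*} {P : Set X} (a b : X) (h : 2 < P.ncard) :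
    ∃ x ∈ P, x ≠ a ∧ x ≠ b := by
  obtain ⟨x, hx, hxs⟩ := pick_avoid (s := {a, b}) (Set.toFinite _)
    ((Set.ncard_insert_le _ _).trans (by simp)) h
  exact ⟨x, hx, by simpa using hxs⟩

lemma pick_avoid3 {X : Type*} {P : Set X} (a b c : X) (h : 3 < P.ncard) :
    ∃ x ∈ P, x ≠ a ∧ x ≠ b ∧ x ≠ c := by
  obtain ⟨x, hx, hxs⟩ := pick_avoid (s := {a, b, c}) (Set.toFinite _)
    ((Set.ncard_insert_le _ _).trans (by
      have := Set.ncard_insert_le b ({c} : Set X); simp at this ⊢; omega)) h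
  exact ⟨x, hx, by simpa using hxs⟩

lemma pick_avoid4 {X : Type*} {P : Set X} (a b c d : X) (h : 4 < P.ncard) :
    ∃ x ∈ P, x ≠ a ∧ x ≠ b ∧ x ≠ c ∧ x ≠ d := by
  obtain ⟨x, hx, hxs⟩ := pick_avoid (s := {a, b, c, d}) (Set.toFinite _)
    (le_trans (Set.ncard_insert_le _ _) (by
      have h1 := Set.ncard_insert_le b ({c, d} : Set X)
      have h2 := Set.ncard_insert_le c ({d} : Set X)
      simp at h1 h2 ⊢
      omega)) h
  exact ⟨x, hx, by simpa using hxs⟩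

lemma partner {m : ℕ} (hm : 2 ≤ m) {P : Set (Set (Fin (m+3)))}
    (hP : (cycleGraph (m+3)).IsKFairCoalPartition 2 P) {A : Set (Fin (m+3))} (hA : A ∈ P) :
    ∃ B ∈ P, B ≠ A ∧ Disjoint A B ∧ ¬ DS m A ∧ ¬ DS m B ∧ DS m (A ∪ B) := by
  rcases hP.2.2.2 A hA with ⟨hdom, hcard⟩ | ⟨_, B, hB, hBA, hdisj, hnA, hnB, hdU⟩
  · exact absurd hcard (fun hc => small_block m hm A ((kfd_iff m A).mp hdom) hc)
  · exact ⟨B, hB, hBA, hdisj, fun h => hnA ((kfd_iff m A).mpr h),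
      fun h => hnB ((kfd_iff m B).mpr h), (kfd_iff m (A ∪ B)).mp hdU⟩

lemma claim_partner {m : ℕ} (hm : 2 ≤ m) {P : Set (Set (Fin (m+3)))}
    (hP : (cycleGraph (m+3)).IsKFairCoalPartition 2 P)
    {A B : Set (Fin (m+3))} (hA : A ∈ P) (hB : B ∈ P) (hBA : B ≠ A)
    (hdAB : DS m (A ∪ B))
    (hside : 4 < P.ncard ∨ ¬ Even (m+3)) :
    ∀ C ∈ P, C ≠ A → C ≠ B → DS m (A ∪ C) ∨ DS m (B ∪ C) := by
  have hne := hP.1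
  have hpd := hP.2.2.1
  intro C hC hCA hCB
  obtain ⟨E, hE, hEC, _, _, _, hdCE⟩ := partner hm hP hC
  by_cases hEA : E = A
  · left; rw [Set.union_comm]; rw [hEA] at hdCE; exact hdCE
  by_cases hEB : E = B
  · right; rw [Set.union_comm]; rw [hEB] at hdCE; exact hdCE
  exfalso
  have hdisjU : Disjoint (A ∪ B) (C ∪ E) := by
    apply Disjoint.union_left <;> apply Disjoint.union_right
    · exact hpd hA hC (Ne.symm hCA)
    · exact hpd hA hE (fun h => hEA h.symm)
    · exact hpd hB hC (Ne.symm hCB)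
    · exact hpd hB hE (fun h => hEB h.symm)
  rcases hside with h5 | hodd
  · obtain ⟨F, hF, hFA, hFB, hFC, hFE⟩ := pick_avoid4 A B C E h5
    obtain ⟨f, hf⟩ := hne F hF
    have hf1 : f ∉ A ∪ B := by
      rintro (h | h)
      · exact block_disj hpd hF hA hFA hf h
      · exact block_disj hpd hF hB hFB hf h
    have hf2 : f ∉ C ∪ E := by
      rintro (h | h)
      · exact block_disj hpd hF hC hFC hf h
      · exact block_disj hpd hF hE hFE hf h
    have r1 := hdAB f hf1
    have r2 := hdCE f hf2
    exact Set.disjoint_left.mp hdisjU r1 r2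
  · exact hodd (alt_even m (A ∪ B) (C ∪ E) hdAB hdCE hdisjU)

lemma upper_any {m : ℕ} (hm : 2 ≤ m) {P : Set (Set (Fin (m+3)))}
    (hP : (cycleGraph (m+3)).IsKFairCoalPartition 2 P) : P.ncard ≤ 4 := by
  by_contra hcon
  push_neg at hcon
  have hne := hP.1
  have hU := hP.2.1
  have hpd := hP.2.2.1
  obtain ⟨A, hA⟩ : P.Nonempty := Set.nonempty_of_ncard_ne_zero (by omega)
  obtain ⟨B, hB, hBA, _, hnA, hnB, hdAB⟩ := partner hm hP hA
  have claim := claim_partner hm hP hA hB hBA hdAB (Or.inl hcon)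
  obtain ⟨C, hC, hCA, hCB⟩ := pick_avoid2 (P := P) A B (by omega)
  obtain ⟨D, hD, hDA, hDB, hDC⟩ := pick_avoid3 (P := P) A B C (by omega)
  obtain ⟨G, hG, hGA, hGB, hGC, hGD⟩ := pick_avoid4 (P := P) A B C D (by omega)
  have hdBA : DS m (B ∪ A) := by rwa [Set.union_comm]
  have hc := claim C hC hCA hCB
  have hd := claim D hD hDA hDB
  have hg := claim G hG hGA hGB
  rcases hc with hc | hc <;> rcases hd with hd | hd <;> rcases hg with hg | hg
  · exact hnA (key_lemma hU hpd hB hC hD (Ne.symm hBA) (Ne.symm hCA) (Ne.symm hDA)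
      (Ne.symm hCB) (Ne.symm hDB) (Ne.symm hDC) hdAB hc hd)
  · exact hnA (key_lemma hU hpd hB hC hD (Ne.symm hBA) (Ne.symm hCA) (Ne.symm hDA)
      (Ne.symm hCB) (Ne.symm hDB) (Ne.symm hDC) hdAB hc hd)
  · exact hnA (key_lemma hU hpd hB hC hG (Ne.symm hBA) (Ne.symm hCA) (Ne.symm hGA)
      (Ne.symm hCB) (Ne.symm hGB) (Ne.symm hGC) hdAB hc hg)
  · exact hnB (key_lemma hU hpd hA hD hG hBA (Ne.symm hDB) (Ne.symm hGB)
      (Ne.symm hDA) (Ne.symm hGA) (Ne.symm hGD) hdBA hd hg)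
  · exact hnA (key_lemma hU hpd hB hD hG (Ne.symm hBA) (Ne.symm hDA) (Ne.symm hGA)
      (Ne.symm hDB) (Ne.symm hGB) (Ne.symm hGD) hdAB hd hg)
  · exact hnB (key_lemma hU hpd hA hC hG hBA (Ne.symm hCB) (Ne.symm hGB)
      (Ne.symm hCA) (Ne.symm hGA) (Ne.symm hGC) hdBA hc hg)
  · exact hnB (key_lemma hU hpd hA hC hD hBA (Ne.symm hCB) (Ne.symm hDB)
      (Ne.symm hCA) (Ne.symm hDA) (Ne.symm hDC) hdBA hc hd)
  · exact hnB (key_lemma hU hpd hA hC hD hBA (Ne.symm hCB) (Ne.symm hDB)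
      (Ne.symm hCA) (Ne.symm hDA) (Ne.symm hDC) hdBA hc hd)

lemma upper_odd {m : ℕ} (hm : 2 ≤ m) (hodd : ¬ Even (m+3)) {P : Set (Set (Fin (m+3)))}
    (hP : (cycleGraph (m+3)).IsKFairCoalPartition 2 P) : P.ncard ≤ 3 := by
  by_contra hcon
  push_neg at hcon
  have hne := hP.1
  have hU := hP.2.1
  have hpd := hP.2.2.1
  obtain ⟨A, hA⟩ : P.Nonempty := Set.nonempty_of_ncard_ne_zero (by omega)
  obtain ⟨B, hB, hBA, _, hnA, hnB, hdAB⟩ := partner hm hP hA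
  have claim := claim_partner hm hP hA hB hBA hdAB (Or.inr hodd)
  obtain ⟨C, hC, hCA, hCB⟩ := pick_avoid2 (P := P) A B (by omega)
  obtain ⟨D, hD, hDA, hDB, hDC⟩ := pick_avoid3 (P := P) A B C (by omega)
  have hdBA : DS m (B ∪ A) := by rwa [Set.union_comm]
  have hc := claim C hC hCA hCB
  have hd := claim D hD hDA hDB
  rcases hc with hc | hc <;> rcases hd with hd | hd
  · exact hnA (key_lemma hU hpd hB hC hD (Ne.symm hBA) (Ne.symm hCA) (Ne.symm hDA)
      (Ne.symm hCB) (Ne.symm hDB) (Ne.symm hDC) hdAB hc hd)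
  · -- DS (A∪C), DS (B∪D)
    apply hodd
    apply alt_even m (A ∪ C) (B ∪ D) hc hd
    apply Disjoint.union_left <;> apply Disjoint.union_right
    · exact hpd hA hB (Ne.symm hBA)
    · exact hpd hA hD (Ne.symm hDA)
    · exact hpd hC hB hCB
    · exact hpd hC hD (Ne.symm hDC)
  · apply hodd
    apply alt_even m (B ∪ C) (A ∪ D) hc hd
    apply Disjoint.union_left <;> apply Disjoint.union_right
    · exact hpd hB hA hBA
    · exact hpd hB hD (Ne.symm hDB)
    · exact hpd hC hA hCA
    · exact hpd hC hD (Ne.symm hDC)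
  · exact hnB (key_lemma hU hpd hA hC hD hBA (Ne.symm hCB) (Ne.symm hDB)
      (Ne.symm hCA) (Ne.symm hDA) (Ne.symm hDC) hdBA hc hd)

lemma vao_lt {m : ℕ} (v : Fin (m+3)) (h : v.val + 1 < m+3) : (v+1).val = v.val + 1 := by
  rcases eq_or_ne v (Fin.last (m+2)) with rfl | hne
  · simp [Fin.val_last] at h
  · rw [Fin.val_add_one, if_neg hne]

lemma vao_last {m : ℕ} (v : Fin (m+3)) (h : v.val + 1 = m+3) : (v+1).val = 0 := by
  have hv : v = Fin.last (m+2) := by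
    apply Fin.ext; simp only [Fin.val_last]; omega
  rw [Fin.val_add_one, if_pos hv]


def E2set (m : ℕ) : Set (Fin (m+3)) := {v | v.val % 2 = 0 ∧ v.val ≠ 0}
def O2set (m : ℕ) : Set (Fin (m+3)) := {v | v.val % 2 = 1 ∧ v.val ≠ 1}

lemma lower4 (m : ℕ) (hm : 1 ≤ m) (heven : Even (m+3)) : ∃ P : Set (Set (Fin (m+3))),
    (cycleGraph (m+3)).IsKFairCoalPartition 2 P ∧ P.ncard = 4 := by
  rw [Nat.even_iff] at heven
  obtain ⟨z, hzval⟩ : ∃ z : Fin (m+3), z.val = 0 := ⟨⟨0, by omega⟩, rfl⟩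
  obtain ⟨o, hoval⟩ : ∃ o : Fin (m+3), o.val = 1 := ⟨⟨1, by omega⟩, rfl⟩
  obtain ⟨t, htval⟩ : ∃ t : Fin (m+3), t.val = 2 := ⟨⟨2, by omega⟩, rfl⟩
  obtain ⟨u, huval⟩ : ∃ u : Fin (m+3), u.val = 3 := ⟨⟨3, by omega⟩, rfl⟩
  have hz1 : z + 1 = o := Fin.ext (by rw [vao_lt z (by omega)]; omega)
  have ho1 : o + 1 = t := Fin.ext (by rw [vao_lt o (by omega)]; omega)
  have ht1 : (t + 1).val = 3 := by rw [vao_lt t (by omega)]; omega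
  have hzo : z ≠ o := Fin.ne_of_val_ne (by omega)
  -- memberships
  have htE2 : t ∈ E2set m := ⟨by omega, by omega⟩
  have huO2 : u ∈ O2set m := ⟨by omega, by omega⟩
  have hzE2 : z ∉ E2set m := fun h => h.2 (by omega)
  have hoO2 : o ∉ O2set m := fun h => h.2 (by omega)
  have hoE2 : o ∉ E2set m := fun h => by have := h.1; omega
  have hzO2 : z ∉ O2set m := fun h => by have := h.1; omega
  have htO2 : t ∉ O2set m := fun h => by have := h.1; omega
  -- domination of unions
  have hdZ : DS m ({z} ∪ E2set m) := by
    intro v hv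
    have hv1 : v ≠ z := fun h => hv (Or.inl h)
    have hv2 : v ∉ E2set m := fun h => hv (Or.inr h)
    have hvne : v.val ≠ 0 := fun h => hv1 (Fin.ext (by omega))
    have hodd : v.val % 2 = 1 := by
      by_contra h
      exact hv2 ⟨by omega, hvne⟩
    rcases Nat.lt_or_ge (v.val + 1) (m+3) with hlt | hge
    · right
      have := vao_lt v hlt
      exact ⟨by omega, by omega⟩
    · left
      have hval : (v+1).val = 0 := vao_last v (by have := v.isLt; omega)
      simp only [Set.mem_singleton_iff]
      exact Fin.ext (by omega)
  have hdO : DS m ({o} ∪ O2set m) := by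
    intro v hv
    have hv1 : v ≠ o := fun h => hv (Or.inl h)
    have hv2 : v ∉ O2set m := fun h => hv (Or.inr h)
    have hv1' : v.val ≠ 1 := fun h => hv1 (Fin.ext (by omega))
    have hevenv : v.val % 2 = 0 := by
      by_contra h
      exact hv2 ⟨by omega, hv1'⟩
    have hlt : v.val + 1 < m + 3 := by
      have := v.isLt
      by_contra h
      have hveq : v.val = m + 2 := by omega
      omega
    have hval := vao_lt v hlt
    by_cases hvz : v = z
    · left
      subst hvz
      rw [hz1]
      rfl
    · right
      have hvne : v.val ≠ 0 := fun h => hvz (Fin.ext (by omega))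
      exact ⟨by omega, by omega⟩
  -- non-domination
  have hnZ : ¬ DS m {z} := by
    intro h
    have h1 := h o (by simp only [Set.mem_singleton_iff]; exact Ne.symm hzo)
    rw [ho1] at h1
    simp only [Set.mem_singleton_iff] at h1
    have := congrArg Fin.val h1
    omega
  have hnO : ¬ DS m {o} := by
    intro h
    have h1 := h t (by
      simp only [Set.mem_singleton_iff]
      exact Fin.ne_of_val_ne (by omega))
    simp only [Set.mem_singleton_iff] at h1
    have := congrArg Fin.val h1
    omega
  have hnE2 : ¬ DS m (E2set m) := by
    intro h
    have h1 := h z hzE2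
    rw [hz1] at h1
    exact hoE2 h1
  have hnO2 : ¬ DS m (O2set m) := by
    intro h
    have h1 := h z hzO2
    rw [hz1] at h1
    exact hoO2 h1
  -- set distinctness
  have neZO : ({z} : Set (Fin (m+3))) ≠ {o} :=
    fun h => hzo (by rw [Set.singleton_eq_singleton_iff] at h; exact h)
  have neZE2 : ({z} : Set (Fin (m+3))) ≠ E2set m := fun h => hzE2 (h ▸ rfl)
  have neZO2 : ({z} : Set (Fin (m+3))) ≠ O2set m := fun h => hzO2 (h ▸ rfl)
  have neOE2 : ({o} : Set (Fin (m+3))) ≠ E2set m := fun h => hoE2 (h ▸ rfl)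
  have neOO2 : ({o} : Set (Fin (m+3))) ≠ O2set m := fun h => hoO2 (h ▸ rfl)
  have neE2O2 : E2set m ≠ O2set m := fun h => htO2 (h ▸ htE2)
  -- disjointness
  have dZO : Disjoint ({z} : Set (Fin (m+3))) {o} := by
    rw [Set.disjoint_left]
    rintro a ha hb
    simp only [Set.mem_singleton_iff] at ha hb
    exact hzo (ha ▸ hb)
  have dZE2 : Disjoint ({z} : Set (Fin (m+3))) (E2set m) := by
    rw [Set.disjoint_left]
    rintro a ha hb
    simp only [Set.mem_singleton_iff] at ha
    exact hzE2 (ha ▸ hb)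
  have dZO2 : Disjoint ({z} : Set (Fin (m+3))) (O2set m) := by
    rw [Set.disjoint_left]
    rintro a ha hb
    simp only [Set.mem_singleton_iff] at ha
    exact hzO2 (ha ▸ hb)
  have dOE2 : Disjoint ({o} : Set (Fin (m+3))) (E2set m) := by
    rw [Set.disjoint_left]
    rintro a ha hb
    simp only [Set.mem_singleton_iff] at ha
    exact hoE2 (ha ▸ hb)
  have dOO2 : Disjoint ({o} : Set (Fin (m+3))) (O2set m) := by
    rw [Set.disjoint_left]
    rintro a ha hb
    simp only [Set.mem_singleton_iff] at ha
    exact hoO2 (ha ▸ hb)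
  have dE2O2 : Disjoint (E2set m) (O2set m) := by
    rw [Set.disjoint_left]
    rintro a ha hb
    have := ha.1
    have := hb.1
    omega
  refine ⟨{{z}, {o}, E2set m, O2set m}, ⟨?_, ?_, ?_, ?_⟩, ?_⟩
  · rintro A (rfl | rfl | rfl | rfl)
    · exact ⟨z, rfl⟩
    · exact ⟨o, rfl⟩
    · exact ⟨t, htE2⟩
    · exact ⟨u, huO2⟩
  · ext v
    simp only [Set.sUnion_insert, Set.sUnion_singleton, Set.mem_union, Set.mem_singleton_iff,
      Set.mem_univ, iff_true, E2set, O2set, Set.mem_setOf_eq]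
    by_cases h1 : v = z
    · tauto
    · have h1' : v.val ≠ 0 := fun h => h1 (Fin.ext (by omega))
      by_cases h3 : v.val % 2 = 0
      · tauto
      · by_cases h2 : v = o
        · tauto
        · have h2' : v.val ≠ 1 := fun h => h2 (Fin.ext (by omega))
          have : v.val % 2 = 1 := by omega
          tauto
  · rintro X (rfl | rfl | rfl | rfl) Y (rfl | rfl | rfl | rfl) hne <;>
      simp only [Function.onFun, id_eq] <;>
      first
        | exact absurd rfl hne
        | exact dZO | exact dZO.symm
        | exact dZE2 | exact dZE2.symm
        | exact dZO2 | exact dZO2.symm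
        | exact dOE2 | exact dOE2.symm
        | exact dOO2 | exact dOO2.symm
        | exact dE2O2 | exact dE2O2.symm
  · rintro A (rfl | rfl | rfl | rfl)
    · right
      exact ⟨fun h => hnZ ((kfd_iff m _).mp h), E2set m, by simp, neZE2.symm,
        dZE2, fun h => hnZ ((kfd_iff m _).mp h), fun h => hnE2 ((kfd_iff m _).mp h),
        (kfd_iff m _).mpr hdZ⟩
    · right
      exact ⟨fun h => hnO ((kfd_iff m _).mp h), O2set m, by simp, neOO2.symm,
        dOO2, fun h => hnO ((kfd_iff m _).mp h), fun h => hnO2 ((kfd_iff m _).mp h),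
        (kfd_iff m _).mpr hdO⟩
    · right
      have hdZ' : DS m (E2set m ∪ {z}) := by rwa [Set.union_comm]
      exact ⟨fun h => hnE2 ((kfd_iff m _).mp h), {z}, by simp, neZE2,
        dZE2.symm, fun h => hnE2 ((kfd_iff m _).mp h), fun h => hnZ ((kfd_iff m _).mp h),
        (kfd_iff m _).mpr hdZ'⟩
    · right
      have hdO' : DS m (O2set m ∪ {o}) := by rwa [Set.union_comm]
      exact ⟨fun h => hnO2 ((kfd_iff m _).mp h), {o}, by simp, neOO2,
        dOO2.symm, fun h => hnO2 ((kfd_iff m _).mp h), fun h => hnO ((kfd_iff m _).mp h),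
        (kfd_iff m _).mpr hdO'⟩
  · rw [Set.ncard_insert_of_notMem (by simp [neZO, neZE2, neZO2]),
      Set.ncard_insert_of_notMem (by simp [neOE2, neOO2]),
      Set.ncard_insert_of_notMem (by simp [neE2O2]), Set.ncard_singleton]

lemma lower3 (m : ℕ) : ∃ P : Set (Set (Fin (m+3))),
    (cycleGraph (m+3)).IsKFairCoalPartition 2 P ∧ P.ncard = 3 := by
  set z : Fin (m+3) := ⟨0, by omega⟩ with hz
  set o : Fin (m+3) := ⟨1, by omega⟩ with ho
  set t : Fin (m+3) := ⟨2, by omega⟩ with ht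
  have hzo : z ≠ o := by simp [hz, ho, Fin.ext_iff]
  have hzt : z ≠ t := by simp [hz, ht, Fin.ext_iff]
  have hot : o ≠ t := by simp [ho, ht, Fin.ext_iff]
  have hz1 : z + 1 = o := by
    apply Fin.ext; rw [vao_lt z (by simp [hz])]
  have ho1 : o + 1 = t := by
    apply Fin.ext; rw [vao_lt o (by simp [ho])]
  have ht1 : t + 1 ≠ o := by
    intro hcon
    have hval : (t + 1).val = 1 := by rw [hcon]
    rcases Nat.lt_or_ge (t.val + 1) (m+3) with h | h
    · rw [vao_lt t h] at hval; simp [ht] at hval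
    · have : t.val + 1 = m + 3 := by have := t.isLt; omega
      rw [vao_last t this] at hval; omega
  set Cc : Set (Fin (m+3)) := ({z, o} : Set (Fin (m+3)))ᶜ with hCc
  -- basic membership facts
  have htC : t ∈ Cc := by simp [hCc]; exact ⟨Ne.symm hzt, Ne.symm hot⟩
  have hzC : z ∉ Cc := by simp [hCc]
  have hoC : o ∉ Cc := by simp [hCc]
  -- non-domination facts
  have hnZ : ¬ DS m {z} := by
    intro h
    have h1 := h o (by simp [Ne.symm hzo])
    rw [ho1] at h1
    simp at h1
    exact hzt h1.symm
  have hnO : ¬ DS m {o} := by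
    intro h
    have h1 := h t (by simp [Ne.symm hot])
    simp at h1
    exact ht1 (by rw [h1])
  have hnC : ¬ DS m Cc := by
    intro h
    have h1 := h z hzC
    rw [hz1] at h1
    exact hoC h1
  -- domination of unions
  have hdZC : DS m ({z} ∪ Cc) := by
    intro v hv
    have hv1 : v ≠ z := fun h => hv (Or.inl h)
    have hv2 : v ∈ ({z, o} : Set (Fin (m+3))) := by
      by_contra h; exact hv (Or.inr h)
    rcases hv2 with h | h
    · exact absurd h hv1
    · subst h
      rw [ho1]
      right; exact htC
  have hdOC : DS m ({o} ∪ Cc) := by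
    intro v hv
    have hv1 : v ≠ o := fun h => hv (Or.inl h)
    have hv2 : v ∈ ({z, o} : Set (Fin (m+3))) := by
      by_contra h; exact hv (Or.inr h)
    rcases hv2 with h | h
    · subst h; rw [hz1]; left; rfl
    · exact absurd h hv1
  -- set inequalities
  have neZO : ({z} : Set (Fin (m+3))) ≠ {o} := by
    intro h; exact hzo (by rw [Set.singleton_eq_singleton_iff] at h; exact h)
  have neZC : ({z} : Set (Fin (m+3))) ≠ Cc := by
    intro h; exact hzC (h ▸ rfl)
  have neOC : ({o} : Set (Fin (m+3))) ≠ Cc := by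
    intro h; exact hoC (h ▸ rfl)
  refine ⟨{{z}, {o}, Cc}, ⟨?_, ?_, ?_, ?_⟩, ?_⟩
  · rintro A (rfl | rfl | rfl)
    · exact ⟨z, rfl⟩
    · exact ⟨o, rfl⟩
    · exact ⟨t, htC⟩
  · ext v
    simp [hCc]
    tauto
  · rintro X (rfl | rfl | rfl) Y (rfl | rfl | rfl) hne <;>
      simp only [Function.onFun, id_eq] <;>
      first
        | exact absurd rfl hne
        | (rw [Set.disjoint_left]; intro a ha hb; simp_all [hCc])
  · rintro A (rfl | rfl | rfl)
    · right
      refine ⟨fun h => hnZ ((kfd_iff m _).mp h), Cc, by simp, neZC.symm, ?_,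
        fun h => hnZ ((kfd_iff m _).mp h), fun h => hnC ((kfd_iff m _).mp h),
        (kfd_iff m _).mpr hdZC⟩
      rw [Set.disjoint_left]; intro a ha; simp at ha; subst ha; exact fun h => hzC h
    · right
      refine ⟨fun h => hnO ((kfd_iff m _).mp h), Cc, by simp, neOC.symm, ?_,
        fun h => hnO ((kfd_iff m _).mp h), fun h => hnC ((kfd_iff m _).mp h),
        (kfd_iff m _).mpr hdOC⟩
      rw [Set.disjoint_left]; intro a ha; simp at ha; subst ha; exact fun h => hoC h
    · right
      have hdCZ : DS m (Cc ∪ {z}) := by rwa [Set.union_comm]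
      refine ⟨fun h => hnC ((kfd_iff m _).mp h), {z}, by simp, neZC, ?_,
        fun h => hnC ((kfd_iff m _).mp h), fun h => hnZ ((kfd_iff m _).mp h),
        (kfd_iff m _).mpr hdCZ⟩
      rw [Set.disjoint_left]; intro a ha hb; simp at hb; subst hb; exact hzC ha
  · rw [Set.ncard_insert_of_notMem (by simp [neZO, neZC]),
      Set.ncard_insert_of_notMem (by simp [neOC]), Set.ncard_singleton]

end TwoFairAux

theorem twoFairCoalNum_cycleGraph (n : ℕ) (hn : 3 ≤ n) :
    (Even n → (SimpleGraph.cycleGraph n).kFairCoalNum 2 = 4) ∧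
    (Odd n → (SimpleGraph.cycleGraph n).kFairCoalNum 2 = 3) := by
  obtain ⟨m, rfl⟩ : ∃ m, n = m + 3 := ⟨n - 3, by omega⟩
  open TwoFairAux in
  have hbdd : BddAbove {k | ∃ P : Set (Set (Fin (m+3))),
      (SimpleGraph.cycleGraph (m+3)).IsKFairCoalPartition 2 P ∧ P.ncard = k} := by
    refine ⟨m + 3, ?_⟩
    rintro k ⟨P, hP, rfl⟩
    exact TwoFairAux.card_le_blocks hP.1 hP.2.2.1
  constructor
  · intro he
    have he' := he
    rw [Nat.even_iff] at he'
    have hm1 : 1 ≤ m := by omega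
    rw [SimpleGraph.kFairCoalNum]
    apply le_antisymm
    · apply csSup_le
      · obtain ⟨P, hP, hcard⟩ := TwoFairAux.lower4 m hm1 he
        exact ⟨4, P, hP, hcard⟩
      · rintro k ⟨P, hP, rfl⟩
        rcases Nat.lt_or_ge m 2 with h | h
        · exact (TwoFairAux.card_le_blocks hP.1 hP.2.2.1).trans (by omega)
        · exact TwoFairAux.upper_any h hP
    · apply le_csSup hbdd
      obtain ⟨P, hP, hcard⟩ := TwoFairAux.lower4 m hm1 he
      exact ⟨P, hP, hcard⟩
  · intro ho
    have hodd' : ¬ Even (m+3) := Nat.not_even_iff_odd.mpr ho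
    rw [SimpleGraph.kFairCoalNum]
    apply le_antisymm
    · apply csSup_le
      · obtain ⟨P, hP, hcard⟩ := TwoFairAux.lower3 m
        exact ⟨3, P, hP, hcard⟩
      · rintro k ⟨P, hP, rfl⟩
        rcases Nat.lt_or_ge m 2 with h | h
        · have hm0 : m = 0 := by rw [Nat.odd_iff] at ho; omega
          subst hm0
          exact TwoFairAux.card_le_blocks hP.1 hP.2.2.1
        · exact TwoFairAux.upper_odd h hodd' hP
    · apply le_csSup hbdd
      obtain ⟨P, hP, hcard⟩ := TwoFairAux.lower3 m
      exact ⟨P, hP, hcard⟩
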